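/- arXiv:1908.06329 — 2 statements merged into one kernel-verified Lean document; each statement's English description precedes it below -/
import Mathlib

section
/- With F, λ, r, η as above, and c² = Var(G) (the variance of the random variable with distribution F, which has mean 1), define κ(h) = (∫_{λh}^∞ ∫_t^∞ (1 − F(x)) dx dt)/(1 − F(λh)) − ((c² + 1)/2)·(∫_{λh}^∞ (1 − F(x)) dx)/(1 − F(λh)). Then κ(0) = 0 and for all h ≥ 0, the right derivative satisfies κ̇(h) − r(h)·κ(h) = λ·(η(h) + (c² − 1)/2). -/
open MeasureTheory Set Filter

open Topology in
/-- FTC for tail integrals: right derivative of `v ↦ ∫_{(v,∞)} f` is `-(f u)`. -/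
lemma deriv_tail (f : ℝ → ℝ) (hfi : IntegrableOn f (Set.Ici 0)) (u : ℝ) (hu : 0 ≤ u)
    (hcont : ContinuousWithinAt f (Set.Ici u) u) :
    HasDerivWithinAt (fun v => ∫ x in Set.Ioi v, f x) (-(f u)) (Set.Ici u) u := by
  have hmeas : StronglyMeasurableAtFilter f (𝓝[>] u) volume :=
    ⟨Ici 0, mem_of_superset self_mem_nhdsWithin
      (fun x hx => le_of_lt (lt_of_le_of_lt hu hx)), hfi.1⟩
  have hii : IntervalIntegrable f volume 0 u :=
    (hfi.mono_set (by rw [uIcc_of_le hu]; exact Icc_subset_Ici_self)).intervalIntegrable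
  have hft : HasDerivWithinAt
      (fun v => (∫ x in Set.Ioi (0:ℝ), f x) - ∫ x in (0:ℝ)..v, f x) (-(f u))
      (Set.Ici u) u := by
    simpa using (intervalIntegral.integral_hasDerivWithinAt_right hii hmeas
      (hcont.mono Ioi_subset_Ici_self)).const_sub (∫ x in Set.Ioi (0:ℝ), f x)
  have hkey : ∀ v, 0 ≤ v →
      (∫ x in Set.Ioi v, f x) = (∫ x in Set.Ioi (0:ℝ), f x) - ∫ x in (0:ℝ)..v, f x := by
    intro v hv
    have hsplit : (∫ x in Set.Ioc 0 v, f x) + ∫ x in Set.Ioi v, f x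
        = ∫ x in Set.Ioi (0:ℝ), f x := by
      rw [← MeasureTheory.setIntegral_union (Ioc_disjoint_Ioi le_rfl) measurableSet_Ioi
        (hfi.mono_set (fun x hx => le_of_lt hx.1))
        (hfi.mono_set (fun x hx => le_trans hv (le_of_lt hx))),
        Ioc_union_Ioi_eq_Ioi hv]
    rw [intervalIntegral.integral_of_le hv]
    linarith
  exact hft.congr (fun v hv => hkey v (le_trans hu hv)) (hkey u hu)

/-- identity for the right derivative of the function κ built from the
second-order residual life and the mean residual life of F:
κ(0) = 0 and κ̇(h) − r(h)·κ(h) = λ·(η(h) + (c² − 1)/2). -/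
theorem stmt1 (F F' : ℝ → ℝ) (lam csq : ℝ) (hlam : 0 < lam)
    (hmono : Monotone F) (hF0 : F 0 = 0)
    (hFlt : ∀ t ≥ (0:ℝ), F t < 1)
    (hFderiv : ∀ t ≥ (0:ℝ), HasDerivWithinAt F (F' t) (Set.Ici t) t)
    (hint : IntegrableOn (fun y => 1 - F y) (Set.Ici 0))
    (hint2 : IntegrableOn (fun t => ∫ x in Set.Ioi t, (1 - F x)) (Set.Ici 0))
    (hmean : ∫ y in Set.Ioi (0:ℝ), (1 - F y) = 1)
    (hcsq : csq = 2 * (∫ t in Set.Ioi (0:ℝ), ∫ x in Set.Ioi t, (1 - F x)) - 1)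
    (r η κ : ℝ → ℝ)
    (hr : ∀ h, r h = lam * F' (lam * h) / (1 - F (lam * h)))
    (hη : ∀ h, η h = 1 - (∫ y in Set.Ioi (lam * h), (1 - F y)) / (1 - F (lam * h)))
    (hκ : ∀ h, κ h =
        (∫ t in Set.Ioi (lam * h), ∫ x in Set.Ioi t, (1 - F x)) / (1 - F (lam * h))
          - ((csq + 1) / 2) * ((∫ x in Set.Ioi (lam * h), (1 - F x)) / (1 - F (lam * h)))) :
    κ 0 = 0 ∧ ∀ h ≥ (0:ℝ),
      HasDerivWithinAt κ (r h * κ h + lam * (η h + (csq - 1) / 2)) (Set.Ici h) h := by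
  constructor
  · rw [hκ 0, mul_zero, hF0, hmean, hcsq]
    ring
  · intro h hh
    set u := lam * h with hudef
    have hu : 0 ≤ u := by positivity
    have hLpos : 0 < 1 - F u := by linarith [hFlt u hu]
    have hLne : (1 - F u) ≠ 0 := ne_of_gt hLpos
    -- continuity of 1 - F within Ici u at u
    have hcF : ContinuousWithinAt (fun y => 1 - F y) (Set.Ici u) u :=
      continuousWithinAt_const.sub (hFderiv u hu).continuousWithinAt
    -- derivative of A at u
    have hA : HasDerivWithinAt (fun v => ∫ x in Set.Ioi v, (1 - F x)) (-(1 - F u))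
        (Set.Ici u) u := deriv_tail _ hint u hu hcF
    -- continuity of A within Ici u at u, hence derivative of B
    have hB : HasDerivWithinAt (fun v => ∫ t in Set.Ioi v, ∫ x in Set.Ioi t, (1 - F x))
        (-(∫ x in Set.Ioi u, (1 - F x))) (Set.Ici u) u :=
      deriv_tail _ hint2 u hu hA.continuousWithinAt
    -- the inner map v ↦ lam * v
    have hφ : HasDerivWithinAt (fun v : ℝ => lam * v) lam (Set.Ici h) h := by
      simpa using ((hasDerivAt_id h).const_mul lam).hasDerivWithinAt
    have hmaps : MapsTo (fun v : ℝ => lam * v) (Set.Ici h) (Set.Ici u) :=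
      fun v hv => mul_le_mul_of_nonneg_left hv hlam.le
    -- composed derivatives
    have hLh : HasDerivWithinAt (fun v => 1 - F (lam * v)) (-(F' u * lam)) (Set.Ici h) h := by
      have := HasDerivWithinAt.comp h (hFderiv u hu) hφ hmaps
      have h2 := this.const_sub 1
      simp only [Function.comp_def] at h2
      exact h2
    have hAh : HasDerivWithinAt (fun v => ∫ x in Set.Ioi (lam * v), (1 - F x))
        (-(1 - F u) * lam) (Set.Ici h) h :=
      HasDerivWithinAt.comp h hA hφ hmaps
    have hBh : HasDerivWithinAt
        (fun v => ∫ t in Set.Ioi (lam * v), ∫ x in Set.Ioi t, (1 - F x))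
        (-(∫ x in Set.Ioi u, (1 - F x)) * lam) (Set.Ici h) h :=
      HasDerivWithinAt.comp h hB hφ hmaps
    -- quotients
    have hq1 := hBh.div hLh hLne
    have hq2 := hAh.div hLh hLne
    have hfull := hq1.sub (hq2.const_mul ((csq + 1) / 2))
    have hres := hfull.congr (fun v _ => hκ v) (hκ h)
    refine HasDerivWithinAt.congr_deriv hres ?_
    rw [hr, hη, hκ]
    have h1 : (1 - F (lam * h)) = 1 - F u := rfl
    rw [h1]
    field_simp
    ring
end

section
/- (Continuity of the controlled integral map) Let h : ℝ^d × ℝ^d → ℝ^d be Lipschitz continuous in each coordinate (hence globally Lipschitz with constant K in the first argument, uniformly in the second). For y ∈ D([0,T], ℝ^d) (càdlàg) and u : [0,T] → ℝ^d bounded measurable, there exists a unique x ∈ D([0,T], ℝ^d) satisfying x(t) = y(t) + ∫_0^t h(x(s), u(s)) ds for all t ∈ [0,T]. Moreover, if x₁, x₂ correspond to data (y₁,u), (y₂,u) then sup_{t≤T}|x₁(t) − x₂(t)| ≤ e^{KT}·sup_{t≤T}|y₁(t) − y₂(t)|. -/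
open MeasureTheory Filter Topology

/-- A function is càdlàg on [0,T]: right-continuous on [0,T) and with left limits on
(0,T]. -/
def CadlagOn {E : Type*} [TopologicalSpace E] (f : ℝ → E) (T : ℝ) : Prop :=
  (∀ t ∈ Set.Ico (0:ℝ) T, ContinuousWithinAt f (Set.Ici t) t) ∧
  (∀ t ∈ Set.Ioc (0:ℝ) T, ∃ l : E, Filter.Tendsto f (nhdsWithin t (Set.Iio t)) (𝓝 l))

noncomputable section StmtAux

abbrev Eu (d : ℕ) := EuclideanSpace ℝ (Fin d)

lemma eu_dist_eq {d : ℕ} (a b : Eu d) :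
    Real.sqrt (∑ i, (a i - b i) ^ 2) = ‖a - b‖ := by
  rw [EuclideanSpace.norm_eq]
  congr 1
  refine Finset.sum_congr rfl fun i _ => ?_
  rw [Real.norm_eq_abs, sq_abs]
  norm_num [PiLp.sub_apply]

lemma eu_norm_eq {d : ℕ} (a : Eu d) :
    Real.sqrt (∑ i, (a i) ^ 2) = ‖a‖ := by
  have := eu_dist_eq a 0
  simpa using this

/-- A càdlàg function is bounded on `[0,T]`. -/
lemma cadlag_bounded {F : Type*} [NormedAddCommGroup F] {f : ℝ → F} {T : ℝ} (hT : 0 < T)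
    (hf : CadlagOn f T) : ∃ C, ∀ t ∈ Set.Icc (0:ℝ) T, ‖f t‖ ≤ C := by
  have key : ∀ t ∈ Set.Icc (0:ℝ) T, ∃ δ, 0 < δ ∧ ∃ C,
      ∀ s ∈ Set.Ioo (t - δ) (t + δ) ∩ Set.Icc 0 T, ‖f s‖ ≤ C := by
    intro t ht
    obtain ⟨δ₁, hδ₁, C₁, hC₁⟩ : ∃ δ, 0 < δ ∧ ∃ C,
        ∀ s ∈ Set.Ico t (t + δ) ∩ Set.Icc 0 T, ‖f s‖ ≤ C := by
      rcases eq_or_lt_of_le ht.2 with hEq | hlt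
      · refine ⟨1, one_pos, ‖f t‖, ?_⟩
        intro s hs
        have : s = t := le_antisymm (hEq ▸ hs.2.2) hs.1.1
        rw [this]
      · have hrc := hf.1 t ⟨ht.1, hlt⟩
        rw [Metric.continuousWithinAt_iff] at hrc
        obtain ⟨δ, hδ, hball⟩ := hrc 1 one_pos
        refine ⟨δ, hδ, ‖f t‖ + 1, ?_⟩
        intro s hs
        have h1 : dist s t < δ := by
          rw [Real.dist_eq, abs_lt]
          constructor <;> [linarith [hs.1.1]; linarith [hs.1.2]]
        have h2 : dist (f s) (f t) < 1 := hball hs.1.1 h1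
        have h3 : ‖f s - f t‖ < 1 := by rw [← dist_eq_norm]; exact h2
        calc ‖f s‖ ≤ ‖f t‖ + ‖f s - f t‖ := norm_le_norm_add_norm_sub' _ _
          _ ≤ ‖f t‖ + 1 := by linarith
    obtain ⟨δ₂, hδ₂, C₂, hC₂⟩ : ∃ δ, 0 < δ ∧ ∃ C,
        ∀ s ∈ Set.Ioo (t - δ) t ∩ Set.Icc 0 T, ‖f s‖ ≤ C := by
      rcases eq_or_lt_of_le ht.1 with hEq | hlt
      · refine ⟨1, one_pos, 0, ?_⟩
        intro s hs
        exact absurd (hs.1.2.trans_le hEq.ge) (not_lt.2 hs.2.1)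
      · obtain ⟨l, hl⟩ := hf.2 t ⟨hlt, ht.2⟩
        rw [Metric.tendsto_nhdsWithin_nhds] at hl
        obtain ⟨δ, hδ, hb⟩ := hl 1 one_pos
        refine ⟨δ, hδ, ‖l‖ + 1, ?_⟩
        intro s hs
        have h1 : dist s t < δ := by
          rw [Real.dist_eq, abs_lt]
          constructor <;> [linarith [hs.1.1]; linarith [hs.1.2]]
        have h2 : dist (f s) l < 1 := hb hs.1.2 h1
        have h3 : ‖f s - l‖ < 1 := by rw [← dist_eq_norm]; exact h2
        calc ‖f s‖ ≤ ‖l‖ + ‖f s - l‖ := norm_le_norm_add_norm_sub' _ _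
          _ ≤ ‖l‖ + 1 := by linarith
    refine ⟨min δ₁ δ₂, lt_min hδ₁ hδ₂, max C₁ C₂, ?_⟩
    intro s hs
    rcases lt_or_ge s t with hst | hst
    · refine le_trans (hC₂ s ⟨⟨?_, hst⟩, hs.2⟩) (le_max_right _ _)
      have := hs.1.1; have h' : t - min δ₁ δ₂ ≤ s := this.le
      have : t - δ₂ ≤ t - min δ₁ δ₂ := by
        have := min_le_right δ₁ δ₂; linarith
      linarith [hs.1.1, min_le_right δ₁ δ₂]
    · refine le_trans (hC₁ s ⟨⟨hst, ?_⟩, hs.2⟩) (le_max_left _ _)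
      have := hs.1.2
      have h' : min δ₁ δ₂ ≤ δ₁ := min_le_left _ _
      linarith
  choose! δ hδ C hC using key
  have hcover : Set.Icc (0:ℝ) T ⊆
      ⋃ i : Set.Icc (0:ℝ) T, Set.Ioo ((i:ℝ) - δ i) ((i:ℝ) + δ i) := by
    intro t ht
    exact Set.mem_iUnion.2 ⟨⟨t, ht⟩, by
      simp only [Set.mem_Ioo]
      constructor <;> [linarith [hδ t ht]; linarith [hδ t ht]]⟩
  obtain ⟨fin, hfin⟩ := isCompact_Icc.elim_finite_subcover
    (fun i : Set.Icc (0:ℝ) T => Set.Ioo ((i:ℝ) - δ i) ((i:ℝ) + δ i))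
    (fun i => isOpen_Ioo) hcover
  have hne : fin.Nonempty := by
    have h0 : (0:ℝ) ∈ Set.Icc (0:ℝ) T := ⟨le_rfl, hT.le⟩
    obtain ⟨V, hV, hmem⟩ := Set.mem_iUnion₂.1 (hfin h0)
    exact ⟨V, hV⟩
  refine ⟨fin.sup' hne (fun i => C i), ?_⟩
  intro t ht
  obtain ⟨i, hi, hmem⟩ := Set.mem_iUnion₂.1 (hfin ht)
  exact le_trans (hC i i.2 t ⟨hmem, ht⟩) (Finset.le_sup' (fun j : Set.Icc (0:ℝ) T => C (j:ℝ)) hi)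

/-- A right-continuous function on `[0,T)` is a.e. strongly measurable on `[0,T]`. -/
lemma cadlag_aesm {d : ℕ} {f : ℝ → Eu d} {T : ℝ} (hT : 0 < T)
    (hf : ∀ t ∈ Set.Ico (0:ℝ) T, ContinuousWithinAt f (Set.Ici t) t) :
    AEStronglyMeasurable f (volume.restrict (Set.Icc 0 T)) := by
  have hmeas : ∀ n : ℕ, Measurable fun s : ℝ =>
      f ((⌊s * ((n:ℝ)+1)⌋ + 1) / ((n:ℝ)+1)) := by
    intro n
    have h1 : Measurable fun s : ℝ => ⌊s * ((n:ℝ)+1)⌋ := (measurable_id.mul_const _).floor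
    exact (measurable_from_top (f := fun k : ℤ => f (((k:ℝ) + 1) / ((n:ℝ)+1)))).comp h1
  have htend : ∀ᵐ s ∂(volume.restrict (Set.Icc 0 T)),
      Tendsto (fun n : ℕ => f ((⌊s * ((n:ℝ)+1)⌋ + 1) / ((n:ℝ)+1))) atTop (𝓝 (f s)) := by
    have h1 : ∀ᵐ s ∂(volume.restrict (Set.Icc 0 T)), s ∈ Set.Icc (0:ℝ) T :=
      ae_restrict_mem measurableSet_Icc
    have h2 : ∀ᵐ s ∂(volume.restrict (Set.Icc 0 T)), s ≠ T := by
      refine ae_iff.2 ?_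
      have he : {a : ℝ | ¬ a ≠ T} = {T} := by ext a; simp
      rw [he, Measure.restrict_apply (measurableSet_singleton T)]
      exact measure_mono_null Set.inter_subset_left Real.volume_singleton
    filter_upwards [h1, h2] with s hs hsT
    have hs' : s ∈ Set.Ico (0:ℝ) T := ⟨hs.1, lt_of_le_of_ne hs.2 hsT⟩
    have hcw := hf s hs'
    have hpos : ∀ n : ℕ, (0:ℝ) < (n:ℝ) + 1 := fun n => by positivity
    have hσ_mem : ∀ n : ℕ, ((⌊s * ((n:ℝ)+1)⌋ + 1 : ℝ) / ((n:ℝ)+1)) ∈ Set.Ici s := by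
      intro n
      rw [Set.mem_Ici, le_div_iff₀ (hpos n)]
      have := Int.lt_floor_add_one (s * ((n:ℝ)+1))
      linarith
    have hσ_le : ∀ n : ℕ, ((⌊s * ((n:ℝ)+1)⌋ + 1 : ℝ) / ((n:ℝ)+1)) ≤ s + 1/((n:ℝ)+1) := by
      intro n
      rw [div_le_iff₀ (hpos n)]
      have h3 := Int.floor_le (s * ((n:ℝ)+1))
      have h4 : (s + 1/((n:ℝ)+1)) * ((n:ℝ)+1) = s * ((n:ℝ)+1) + 1 := by
        field_simp
      linarith
    have htendσ : Tendsto (fun n : ℕ => ((⌊s * ((n:ℝ)+1)⌋ + 1 : ℝ) / ((n:ℝ)+1)))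
        atTop (𝓝 s) := by
      have hupper : Tendsto (fun n : ℕ => s + 1/((n:ℝ)+1)) atTop (𝓝 s) := by
        have := tendsto_one_div_add_atTop_nhds_zero_nat (𝕜 := ℝ)
        have h := tendsto_const_nhds (x := s) (f := atTop (α := ℕ)) |>.add this
        simpa using h
      exact tendsto_of_tendsto_of_tendsto_of_le_of_le tendsto_const_nhds hupper
        (fun n => hσ_mem n) (fun n => hσ_le n)
    exact hcw.tendsto.comp (tendsto_nhdsWithin_iff.2 ⟨htendσ, Eventually.of_forall hσ_mem⟩)
  exact (aemeasurable_of_tendsto_metrizable_ae' (fun n => (hmeas n).aemeasurable)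
    htend).aestronglyMeasurable

lemma H_cont {d : ℕ} {K : ℝ} (hK : 0 < K) (H : Eu d → Eu d → Eu d)
    (hL1 : ∀ w a b, ‖H a w - H b w‖ ≤ K * ‖a - b‖)
    (hL2 : ∀ a w v, ‖H a w - H a v‖ ≤ K * ‖w - v‖) :
    Continuous fun p : Eu d × Eu d => H p.1 p.2 := by
  have hlip : LipschitzWith (2*K).toNNReal (fun p : Eu d × Eu d => H p.1 p.2) := by
    apply LipschitzWith.of_dist_le_mul
    intro p q
    rw [Real.coe_toNNReal _ (by positivity)]
    have h1 : dist (H p.1 p.2) (H q.1 q.2) ≤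
        dist (H p.1 p.2) (H q.1 p.2) + dist (H q.1 p.2) (H q.1 q.2) := dist_triangle _ _ _
    have h2 : dist (H p.1 p.2) (H q.1 p.2) ≤ K * dist p.1 q.1 := by
      rw [dist_eq_norm, dist_eq_norm]; exact hL1 p.2 p.1 q.1
    have h3 : dist (H q.1 p.2) (H q.1 q.2) ≤ K * dist p.2 q.2 := by
      rw [dist_eq_norm, dist_eq_norm]; exact hL2 q.1 p.2 q.2
    have h4 : dist p.1 q.1 ≤ dist p q := by rw [Prod.dist_eq]; exact le_max_left _ _
    have h5 : dist p.2 q.2 ≤ dist p q := by rw [Prod.dist_eq]; exact le_max_right _ _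
    nlinarith [dist_nonneg (x := p) (y := q)]
  exact hlip.continuous

lemma integrand_integrableOn {d : ℕ} {T K : ℝ} (hK : 0 < K)
    (H : Eu d → Eu d → Eu d)
    (hL1 : ∀ w a b, ‖H a w - H b w‖ ≤ K * ‖a - b‖)
    (hL2 : ∀ a w v, ‖H a w - H a v‖ ≤ K * ‖w - v‖)
    (u : ℝ → Eu d) (humeas : Measurable u) (Cu : ℝ) (hu : ∀ s, ‖u s‖ ≤ Cu)
    (v : ℝ → Eu d) (hv : AEStronglyMeasurable v (volume.restrict (Set.Icc 0 T)))
    (Cv : ℝ) (hvb : ∀ s ∈ Set.Icc (0:ℝ) T, ‖v s‖ ≤ Cv) :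
    IntegrableOn (fun s => H (v s) (u s)) (Set.Icc 0 T) := by
  have hcont := H_cont hK H hL1 hL2
  have hum : AEStronglyMeasurable u (volume.restrict (Set.Icc (0:ℝ) T)) :=
    humeas.aestronglyMeasurable
  have hm : AEStronglyMeasurable (fun s => H (v s) (u s))
      (volume.restrict (Set.Icc (0:ℝ) T)) :=
    hcont.comp_aestronglyMeasurable (hv.prodMk hum)
  refine ⟨hm, ?_⟩
  apply HasFiniteIntegral.of_bounded (C := ‖H 0 0‖ + K * Cv + K * Cu)
  filter_upwards [ae_restrict_mem measurableSet_Icc] with s hs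
  have h1 : ‖H (v s) (u s) - H 0 (u s)‖ ≤ K * ‖v s‖ := by
    simpa using hL1 (u s) (v s) 0
  have h2 : ‖H 0 (u s) - H 0 0‖ ≤ K * ‖u s‖ := by
    simpa using hL2 0 (u s) 0
  have key : ‖H (v s) (u s)‖ ≤ ‖H 0 0‖ + (‖H (v s) (u s) - H 0 (u s)‖ + ‖H 0 (u s) - H 0 0‖) := by
    have he : H (v s) (u s) = H 0 0 + ((H (v s) (u s) - H 0 (u s)) + (H 0 (u s) - H 0 0)) := by
      abel
    calc ‖H (v s) (u s)‖ = ‖H 0 0 + ((H (v s) (u s) - H 0 (u s)) + (H 0 (u s) - H 0 0))‖ := by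
          rw [← he]
      _ ≤ ‖H 0 0‖ + ‖(H (v s) (u s) - H 0 (u s)) + (H 0 (u s) - H 0 0)‖ := norm_add_le _ _
      _ ≤ _ := by gcongr; exact norm_add_le _ _
  have h3 : K * ‖v s‖ ≤ K * Cv := by
    have := hvb s hs; nlinarith
  have h4 : K * ‖u s‖ ≤ K * Cu := by
    have := hu s; nlinarith
  linarith

lemma ii_of_Icc {F : Type*} [NormedAddCommGroup F] {f : ℝ → F} {T t : ℝ}
    (hf : IntegrableOn f (Set.Icc 0 T)) (ht : t ∈ Set.Icc (0:ℝ) T) :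
    IntervalIntegrable f volume 0 t := by
  rw [intervalIntegrable_iff_integrableOn_Icc_of_le ht.1]
  exact hf.mono_set (Set.Icc_subset_Icc_right ht.2)

lemma poly_int (K : ℝ) (k : ℕ) (t : ℝ) :
    K * ∫ s in (0:ℝ)..t, (K*s)^k / (Nat.factorial k : ℝ) = (K*t)^(k+1) / (Nat.factorial (k+1) : ℝ) := by
  have he : ∀ s : ℝ, (K*s)^k / (Nat.factorial k : ℝ) = (K^k / (Nat.factorial k : ℝ)) * s^k := by
    intro s; rw [mul_pow]; ring
  simp_rw [he]
  rw [intervalIntegral.integral_const_mul, integral_pow]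
  have h1 : ((Nat.factorial k : ℝ) : ℝ) ≠ 0 := Nat.cast_ne_zero.2 (Nat.factorial_ne_zero k)
  have h2 : ((k:ℝ) + 1) ≠ 0 := by positivity
  rw [Nat.factorial_succ, mul_pow]
  push_cast
  field_simp
  ring

lemma poly_int_mul (K : ℝ) (n : ℕ) (D t : ℝ) :
    ∫ s in (0:ℝ)..t, K * ((K*s)^n / (Nat.factorial n : ℝ) * D)
      = (K*t)^(n+1) / (Nat.factorial (n+1) : ℝ) * D := by
  have he : ∀ s : ℝ, K * ((K*s)^n / (Nat.factorial n : ℝ) * D)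
      = ((K*s)^n / (Nat.factorial n : ℝ)) * (K * D) := fun s => by ring
  simp_rw [he]
  rw [intervalIntegral.integral_mul_const]
  have hp := poly_int K n t
  linear_combination D * hp

lemma cont_poly (K D : ℝ) (k : ℕ) : Continuous fun s : ℝ => (K*s)^k / (Nat.factorial k : ℝ) * D := by
  fun_prop

/-- Grönwall-type iteration lemma. -/
lemma gronwall_aux {φ : ℝ → ℝ} {T K δ C : ℝ} (hT : 0 < T) (hK : 0 < K) (hδ : 0 ≤ δ)
    (hint : IntegrableOn φ (Set.Icc 0 T))
    (hC : ∀ t ∈ Set.Icc (0:ℝ) T, φ t ≤ C)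
    (hineq : ∀ t ∈ Set.Icc (0:ℝ) T, φ t ≤ δ + K * ∫ s in (0:ℝ)..t, φ s) :
    ∀ t ∈ Set.Icc (0:ℝ) T, φ t ≤ δ * Real.exp (K * T) := by
  have main : ∀ n : ℕ, ∀ t ∈ Set.Icc (0:ℝ) T,
      φ t ≤ δ * (∑ k ∈ Finset.range n, (K * t) ^ k / (Nat.factorial k : ℝ)) + C * ((K * t) ^ n / (Nat.factorial n : ℝ)) := by
    intro n
    induction n with
    | zero => intro t ht; simpa using hC t ht
    | succ n ih =>
      intro t ht
      refine (hineq t ht).trans ?_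
      have intk : ∀ k : ℕ, IntervalIntegrable (fun s => (K*s)^k / (Nat.factorial k : ℝ)) volume 0 t :=
        fun k => (by fun_prop : Continuous fun s : ℝ => (K*s)^k / (Nat.factorial k : ℝ)).intervalIntegrable _ _
      have int1 : IntervalIntegrable
          (fun s => δ * (∑ k ∈ Finset.range n, (K*s)^k / (Nat.factorial k : ℝ))) volume 0 t :=
        (by fun_prop : Continuous fun s : ℝ =>
          δ * (∑ k ∈ Finset.range n, (K*s)^k / (Nat.factorial k : ℝ))).intervalIntegrable _ _
      have int2 : IntervalIntegrable (fun s => C * ((K*s)^n / (Nat.factorial n : ℝ))) volume 0 t :=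
        (by fun_prop : Continuous fun s : ℝ => C * ((K*s)^n / (Nat.factorial n : ℝ))).intervalIntegrable _ _
      have hmono : (∫ s in (0:ℝ)..t, φ s) ≤ ∫ s in (0:ℝ)..t,
          (δ * (∑ k ∈ Finset.range n, (K*s)^k / (Nat.factorial k : ℝ)) + C * ((K*s)^n / (Nat.factorial n : ℝ))) := by
        apply intervalIntegral.integral_mono_on ht.1 (ii_of_Icc hint ht) (int1.add int2)
        intro s hs
        exact ih s ⟨hs.1, hs.2.trans ht.2⟩
      have e1 : ∫ s in (0:ℝ)..t,
          (δ * (∑ k ∈ Finset.range n, (K*s)^k / (Nat.factorial k : ℝ)) + C * ((K*s)^n / (Nat.factorial n : ℝ)))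
          = δ * (∑ k ∈ Finset.range n, ∫ s in (0:ℝ)..t, (K*s)^k / (Nat.factorial k : ℝ))
            + C * (∫ s in (0:ℝ)..t, (K*s)^n / (Nat.factorial n : ℝ)) := by
        rw [intervalIntegral.integral_add int1 int2, intervalIntegral.integral_const_mul,
          intervalIntegral.integral_const_mul,
          intervalIntegral.integral_finset_sum (fun k _ => intk k)]
      have step : δ + K * ∫ s in (0:ℝ)..t, φ s ≤ δ + K *
          (δ * (∑ k ∈ Finset.range n, ∫ s in (0:ℝ)..t, (K*s)^k / (Nat.factorial k : ℝ))
            + C * (∫ s in (0:ℝ)..t, (K*s)^n / (Nat.factorial n : ℝ))) := by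
        rw [← e1]
        have := mul_le_mul_of_nonneg_left hmono hK.le
        linarith
      refine step.trans (le_of_eq ?_)
      rw [Finset.sum_range_succ']
      have hrw : ∀ k ∈ Finset.range n, (K*t)^(k+1) / (Nat.factorial (k+1) : ℝ) =
          K * ∫ s in (0:ℝ)..t, (K*s)^k / (Nat.factorial k : ℝ) := fun k _ => (poly_int K k t).symm
      rw [Finset.sum_congr rfl hrw, ← poly_int K n t]
      simp only [pow_zero, Nat.factorial_zero, Nat.cast_one]
      rw [← Finset.mul_sum]
      ring
  intro t ht
  have h1 : ∀ n : ℕ, φ t ≤ δ * Real.exp (K*T) + C * ((K*t)^n / (Nat.factorial n : ℝ)) := by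
    intro n
    refine (main n t ht).trans ?_
    have hsum : (∑ k ∈ Finset.range n, (K * t) ^ k / (Nat.factorial k : ℝ)) ≤ Real.exp (K*T) := by
      refine le_trans (Real.sum_le_exp_of_nonneg (mul_nonneg hK.le ht.1) n) ?_
      exact Real.exp_le_exp.2 (mul_le_mul_of_nonneg_left ht.2 hK.le)
    have := mul_le_mul_of_nonneg_left hsum hδ
    linarith
  have h2 : Tendsto (fun n : ℕ => δ * Real.exp (K*T) + C * ((K*t)^n / (Nat.factorial n : ℝ)))
      atTop (𝓝 (δ * Real.exp (K*T) + C * 0)) :=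
    tendsto_const_nhds.add
      (tendsto_const_nhds.mul (FloorSemiring.tendsto_pow_div_factorial_atTop (K*t)))
  have h3 : φ t ≤ δ * Real.exp (K*T) + C * 0 := ge_of_tendsto' h2 h1
  simpa using h3

/-- Existence of a càdlàg solution via Picard iteration. -/
lemma exists_sol {d : ℕ} {T K : ℝ} (hT : 0 < T) (hK : 0 < K)
    (H : Eu d → Eu d → Eu d)
    (hL1 : ∀ w a b, ‖H a w - H b w‖ ≤ K * ‖a - b‖)
    (hL2 : ∀ a w v, ‖H a w - H a v‖ ≤ K * ‖w - v‖)
    (y : ℝ → Eu d) (hy : CadlagOn y T)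
    (u : ℝ → Eu d) (humeas : Measurable u) (Cu : ℝ) (hu : ∀ s, ‖u s‖ ≤ Cu) :
    ∃ x : ℝ → Eu d, CadlagOn x T ∧
      ∀ t ∈ Set.Icc (0:ℝ) T, x t = y t + ∫ s in (0:ℝ)..t, H (x s) (u s) := by
  obtain ⟨Cy, hCy⟩ := cadlag_bounded hT hy
  have hym := cadlag_aesm hT hy.1
  set X := C(Set.Icc (0:ℝ) T, Eu d) with hX
  have hExt : ∀ z : X, Continuous fun s : ℝ => z (Set.projIcc 0 T hT.le s) :=
    fun z => z.continuous.comp continuous_projIcc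
  have hIntOn : ∀ z : X, IntegrableOn
      (fun s => H (y s + z (Set.projIcc 0 T hT.le s)) (u s)) (Set.Icc 0 T) := by
    intro z
    refine integrand_integrableOn hK H hL1 hL2 u humeas Cu hu
      (fun s => y s + z (Set.projIcc 0 T hT.le s))
      (hym.add (hExt z).aestronglyMeasurable) (Cy + ‖z‖) ?_
    intro s hs
    calc ‖y s + z (Set.projIcc 0 T hT.le s)‖
        ≤ ‖y s‖ + ‖z (Set.projIcc 0 T hT.le s)‖ := norm_add_le _ _
      _ ≤ Cy + ‖z‖ := add_le_add (hCy s hs) (z.norm_coe_le_norm _)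
  have hII : ∀ z : X, ∀ t ∈ Set.Icc (0:ℝ) T, IntervalIntegrable
      (fun s => H (y s + z (Set.projIcc 0 T hT.le s)) (u s)) volume 0 t :=
    fun z t ht => ii_of_Icc (hIntOn z) ht
  have hContPrim : ∀ z : X, Continuous fun t : Set.Icc (0:ℝ) T =>
      ∫ s in (0:ℝ)..(t:ℝ), H (y s + z (Set.projIcc 0 T hT.le s)) (u s) :=
    by
    intro z
    have hIcc : Set.uIcc (0:ℝ) T = Set.Icc 0 T := Set.uIcc_of_le hT.le
    have hco := intervalIntegral.continuousOn_primitive_interval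
      (μ := volume) (a := 0) (b := T) (f := fun s => H (y s + z (Set.projIcc 0 T hT.le s)) (u s))
      (by rw [hIcc]; exact hIntOn z)
    rw [hIcc] at hco
    exact hco.restrict
  let Φ : X → X := fun z =>
    ⟨fun t => ∫ s in (0:ℝ)..(t:ℝ), H (y s + z (Set.projIcc 0 T hT.le s)) (u s), hContPrim z⟩
  have hΦapp : ∀ (z : X) (t : Set.Icc (0:ℝ) T),
      Φ z t = ∫ s in (0:ℝ)..(t:ℝ), H (y s + z (Set.projIcc 0 T hT.le s)) (u s) :=
    fun z t => rfl
  have hiter : ∀ n : ℕ, ∀ z₁ z₂ : X, ∀ t : Set.Icc (0:ℝ) T,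
      dist (Φ^[n] z₁ t) (Φ^[n] z₂ t) ≤ (K * t) ^ n / (Nat.factorial n : ℝ) * dist z₁ z₂ := by
    intro n
    induction n with
    | zero =>
      intro z₁ z₂ t
      simpa using ContinuousMap.dist_apply_le_dist t
    | succ n ih =>
      intro z₁ z₂ t
      rw [Function.iterate_succ_apply', Function.iterate_succ_apply']
      set w₁ := Φ^[n] z₁ with hw₁
      set w₂ := Φ^[n] z₂ with hw₂
      have ht := t.2
      rw [dist_eq_norm, hΦapp, hΦapp,
        ← intervalIntegral.integral_sub (hII w₁ t ht) (hII w₂ t ht)]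
      have hb : ‖∫ s in (0:ℝ)..(t:ℝ), (H (y s + w₁ (Set.projIcc 0 T hT.le s)) (u s)
            - H (y s + w₂ (Set.projIcc 0 T hT.le s)) (u s))‖
          ≤ ∫ s in (0:ℝ)..(t:ℝ), ‖H (y s + w₁ (Set.projIcc 0 T hT.le s)) (u s)
            - H (y s + w₂ (Set.projIcc 0 T hT.le s)) (u s)‖ :=
        intervalIntegral.norm_integral_le_integral_norm ht.1
      refine hb.trans ?_
      have hmono : (∫ s in (0:ℝ)..(t:ℝ), ‖H (y s + w₁ (Set.projIcc 0 T hT.le s)) (u s)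
            - H (y s + w₂ (Set.projIcc 0 T hT.le s)) (u s)‖)
          ≤ ∫ s in (0:ℝ)..(t:ℝ), K * ((K*s)^n / (Nat.factorial n : ℝ) * dist z₁ z₂) := by
        apply intervalIntegral.integral_mono_on ht.1 ((hII w₁ t ht).sub (hII w₂ t ht)).norm
        · exact (continuous_const.mul (cont_poly K (dist z₁ z₂) n)).intervalIntegrable _ _
        · intro s hs
          have hsT : s ∈ Set.Icc (0:ℝ) T := ⟨hs.1, hs.2.trans ht.2⟩
          have hest : ‖H (y s + w₁ (Set.projIcc 0 T hT.le s)) (u s)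
              - H (y s + w₂ (Set.projIcc 0 T hT.le s)) (u s)‖
              ≤ K * ‖w₁ (Set.projIcc 0 T hT.le s) - w₂ (Set.projIcc 0 T hT.le s)‖ := by
            have := hL1 (u s) (y s + w₁ (Set.projIcc 0 T hT.le s))
              (y s + w₂ (Set.projIcc 0 T hT.le s))
            simpa [add_sub_add_left_eq_sub] using this
          refine hest.trans ?_
          have hproj : Set.projIcc 0 T hT.le s = ⟨s, hsT⟩ := Set.projIcc_of_mem hT.le hsT
          rw [hproj]
          have hihs := ih z₁ z₂ ⟨s, hsT⟩
          rw [dist_eq_norm] at hihs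
          exact mul_le_mul_of_nonneg_left (by simpa using hihs) hK.le
      refine hmono.trans (le_of_eq ?_)
      exact poly_int_mul K n (dist z₁ z₂) (t:ℝ)
  have hlip : ∀ n : ℕ, ∀ z₁ z₂ : X,
      dist (Φ^[n] z₁) (Φ^[n] z₂) ≤ (K*T)^n / (Nat.factorial n : ℝ) * dist z₁ z₂ := by
    intro n z₁ z₂
    have hC0 : (0:ℝ) ≤ (K*T)^n / (Nat.factorial n : ℝ) * dist z₁ z₂ := by positivity
    rw [ContinuousMap.dist_le hC0]
    intro t
    refine (hiter n z₁ z₂ t).trans ?_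
    have h1 : (K * (t:ℝ))^n ≤ (K*T)^n := by
      apply pow_le_pow_left₀ (mul_nonneg hK.le t.2.1)
      exact mul_le_mul_of_nonneg_left t.2.2 hK.le
    have h2 : (0:ℝ) ≤ dist z₁ z₂ := dist_nonneg
    have h3 : (0:ℝ) < (Nat.factorial n : ℝ) := by positivity
    gcongr
  obtain ⟨n, hn⟩ : ∃ n : ℕ, (K*T)^n / (Nat.factorial n : ℝ) < 1 :=
    ((FloorSemiring.tendsto_pow_div_factorial_atTop (K*T)).eventually
      (gt_mem_nhds one_pos)).exists
  have hfact : (0:ℝ) ≤ (K*T)^n / (Nat.factorial n : ℝ) := by positivity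
  have hcontr : ContractingWith ((K*T)^n / (Nat.factorial n : ℝ)).toNNReal (Φ^[n]) := by
    constructor
    · exact Real.toNNReal_lt_one.2 hn
    · apply LipschitzWith.of_dist_le_mul
      intro z₁ z₂
      rw [Real.coe_toNNReal _ hfact]
      exact hlip n z₁ z₂
  set z₀ := ContractingWith.fixedPoint (Φ^[n]) hcontr with hz₀def
  have hz₀ : Φ z₀ = z₀ := hcontr.isFixedPt_fixedPoint_iterate
  refine ⟨fun t => y t + z₀ (Set.projIcc 0 T hT.le t), ⟨?_, ?_⟩, ?_⟩
  · intro t ht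
    exact (hy.1 t ht).add ((hExt z₀).continuousAt.continuousWithinAt)
  · intro t ht
    obtain ⟨l, hl⟩ := hy.2 t ht
    exact ⟨l + z₀ (Set.projIcc 0 T hT.le t),
      hl.add (((hExt z₀).tendsto t).mono_left nhdsWithin_le_nhds)⟩
  · intro t ht
    show y t + z₀ (Set.projIcc 0 T hT.le t)
      = y t + ∫ s in (0:ℝ)..t, H (y s + z₀ (Set.projIcc 0 T hT.le s)) (u s)
    have h1 : z₀ (Set.projIcc 0 T hT.le t) = Φ z₀ ⟨t, ht⟩ := by
      rw [hz₀, Set.projIcc_of_mem hT.le ht]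
    rw [h1, hΦapp]

/-- Stability / Gronwall estimate for two solutions. -/
lemma stability_aux {d : ℕ} {T K : ℝ} (hT : 0 < T) (hK : 0 < K)
    (H : Eu d → Eu d → Eu d)
    (hL1 : ∀ w a b, ‖H a w - H b w‖ ≤ K * ‖a - b‖)
    (hL2 : ∀ a w v, ‖H a w - H a v‖ ≤ K * ‖w - v‖)
    (u : ℝ → Eu d) (humeas : Measurable u) (Cu : ℝ) (hu : ∀ s, ‖u s‖ ≤ Cu)
    (x₁ x₂ y₁ y₂ : ℝ → Eu d) (hx₁ : CadlagOn x₁ T) (hx₂ : CadlagOn x₂ T)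
    (he₁ : ∀ t ∈ Set.Icc (0:ℝ) T, x₁ t = y₁ t + ∫ s in (0:ℝ)..t, H (x₁ s) (u s))
    (he₂ : ∀ t ∈ Set.Icc (0:ℝ) T, x₂ t = y₂ t + ∫ s in (0:ℝ)..t, H (x₂ s) (u s))
    (M : ℝ) (hM : ∀ t ∈ Set.Icc (0:ℝ) T, ‖y₁ t - y₂ t‖ ≤ M) :
    ∀ t ∈ Set.Icc (0:ℝ) T, ‖x₁ t - x₂ t‖ ≤ Real.exp (K * T) * M := by
  obtain ⟨C₁, hC₁⟩ := cadlag_bounded hT hx₁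
  obtain ⟨C₂, hC₂⟩ := cadlag_bounded hT hx₂
  have hm₁ := cadlag_aesm hT hx₁.1
  have hm₂ := cadlag_aesm hT hx₂.1
  have hInt₁ : IntegrableOn (fun s => H (x₁ s) (u s)) (Set.Icc 0 T) :=
    integrand_integrableOn hK H hL1 hL2 u humeas Cu hu x₁ hm₁ C₁ hC₁
  have hInt₂ : IntegrableOn (fun s => H (x₂ s) (u s)) (Set.Icc 0 T) :=
    integrand_integrableOn hK H hL1 hL2 u humeas Cu hu x₂ hm₂ C₂ hC₂
  have hφint : IntegrableOn (fun s => ‖x₁ s - x₂ s‖) (Set.Icc 0 T) := by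
    refine ⟨(hm₁.sub hm₂).norm, ?_⟩
    apply HasFiniteIntegral.of_bounded (C := C₁ + C₂)
    filter_upwards [ae_restrict_mem measurableSet_Icc] with s hs
    rw [Real.norm_eq_abs, abs_of_nonneg (norm_nonneg _)]
    exact (norm_sub_le _ _).trans (add_le_add (hC₁ s hs) (hC₂ s hs))
  have hM0 : 0 ≤ M := le_trans (norm_nonneg _) (hM 0 ⟨le_rfl, hT.le⟩)
  have key : ∀ t ∈ Set.Icc (0:ℝ) T,
      ‖x₁ t - x₂ t‖ ≤ M + K * ∫ s in (0:ℝ)..t, ‖x₁ s - x₂ s‖ := by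
    intro t ht
    have hii₁ := ii_of_Icc hInt₁ ht
    have hii₂ := ii_of_Icc hInt₂ ht
    rw [he₁ t ht, he₂ t ht]
    have hab : y₁ t + (∫ s in (0:ℝ)..t, H (x₁ s) (u s))
        - (y₂ t + ∫ s in (0:ℝ)..t, H (x₂ s) (u s))
        = (y₁ t - y₂ t) + ((∫ s in (0:ℝ)..t, H (x₁ s) (u s))
          - ∫ s in (0:ℝ)..t, H (x₂ s) (u s)) := by abel
    rw [hab, ← intervalIntegral.integral_sub hii₁ hii₂]
    refine (norm_add_le _ _).trans (add_le_add (hM t ht) ?_)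
    refine (intervalIntegral.norm_integral_le_integral_norm ht.1).trans ?_
    have hmono : (∫ s in (0:ℝ)..t, ‖H (x₁ s) (u s) - H (x₂ s) (u s)‖)
        ≤ ∫ s in (0:ℝ)..t, K * ‖x₁ s - x₂ s‖ := by
      apply intervalIntegral.integral_mono_on ht.1 ((hii₁.sub hii₂).norm)
        ((ii_of_Icc hφint ht).const_mul K)
      intro s _
      exact hL1 (u s) (x₁ s) (x₂ s)
    rw [intervalIntegral.integral_const_mul] at hmono
    exact hmono
  have hgr := gronwall_aux (φ := fun s => ‖x₁ s - x₂ s‖) hT hK hM0 hφint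
    (C := C₁ + C₂)
    (fun t ht => (norm_sub_le _ _).trans (add_le_add (hC₁ t ht) (hC₂ t ht))) key
  intro t ht
  rw [mul_comm]
  exact hgr t ht

lemma cadlag_map {E F : Type*} [TopologicalSpace E] [TopologicalSpace F] {g : E → F}
    (hg : Continuous g) {f : ℝ → E} {T : ℝ} (hf : CadlagOn f T) :
    CadlagOn (fun t => g (f t)) T := by
  refine ⟨fun t ht => (hg.continuousAt).comp_continuousWithinAt (hf.1 t ht), fun t ht => ?_⟩
  obtain ⟨l, hl⟩ := hf.2 t ht
  exact ⟨g l, (hg.tendsto l).comp hl⟩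

end StmtAux

/-- continuity of the controlled integral map: if h is Lipschitz in each
coordinate, then for càdlàg y and bounded measurable u there is a unique càdlàg
solution x of x(t) = y(t) + ∫_0^t h(x(s),u(s))ds on [0,T], and the solution map is
Lipschitz in y: sup_{t≤T}|x₁(t) − x₂(t)| ≤ e^{KT}·sup_{t≤T}|y₁(t) − y₂(t)|. -/
theorem stmt16 (d : ℕ) (T K : ℝ) (hT : 0 < T) (hK : 0 < K)
    (h : (Fin d → ℝ) → (Fin d → ℝ) → Fin d → ℝ)
    (hLip1 : ∀ u x y, Real.sqrt (∑ i, (h x u i - h y u i) ^ 2) ≤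
      K * Real.sqrt (∑ i, (x i - y i) ^ 2))
    (hLip2 : ∀ x u v, Real.sqrt (∑ i, (h x u i - h x v i) ^ 2) ≤
      K * Real.sqrt (∑ i, (u i - v i) ^ 2))
    (y : ℝ → Fin d → ℝ) (hy : CadlagOn y T)
    (u : ℝ → Fin d → ℝ) (humeas : Measurable u)
    (hubdd : ∃ Cu : ℝ, ∀ s, Real.sqrt (∑ i, (u s i) ^ 2) ≤ Cu) :
    (∃ x : ℝ → Fin d → ℝ, CadlagOn x T ∧
      (∀ t ∈ Set.Icc (0:ℝ) T, ∀ i, x t i = y t i + ∫ s in (0:ℝ)..t, h (x s) (u s) i) ∧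
      ∀ x' : ℝ → Fin d → ℝ, CadlagOn x' T →
        (∀ t ∈ Set.Icc (0:ℝ) T, ∀ i, x' t i = y t i + ∫ s in (0:ℝ)..t, h (x' s) (u s) i) →
        ∀ t ∈ Set.Icc (0:ℝ) T, x' t = x t) ∧
    (∀ y₁ y₂ x₁ x₂ : ℝ → Fin d → ℝ, CadlagOn x₁ T → CadlagOn x₂ T →
      (∀ t ∈ Set.Icc (0:ℝ) T, ∀ i, x₁ t i = y₁ t i + ∫ s in (0:ℝ)..t, h (x₁ s) (u s) i) →
      (∀ t ∈ Set.Icc (0:ℝ) T, ∀ i, x₂ t i = y₂ t i + ∫ s in (0:ℝ)..t, h (x₂ s) (u s) i) →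
      ∀ M : ℝ, (∀ t ∈ Set.Icc (0:ℝ) T, Real.sqrt (∑ i, (y₁ t i - y₂ t i) ^ 2) ≤ M) →
        ∀ t ∈ Set.Icc (0:ℝ) T,
          Real.sqrt (∑ i, (x₁ t i - x₂ t i) ^ 2) ≤ Real.exp (K * T) * M) := by
  classical
  obtain ⟨Cu, hCu⟩ := hubdd
  set hE : Eu d → Eu d → Eu d := fun a b => WithLp.toLp 2 (h a.ofLp b.ofLp) with hhE
  set uE : ℝ → Eu d := fun s => WithLp.toLp 2 (u s) with huE
  set yE : ℝ → Eu d := fun s => WithLp.toLp 2 (y s) with hyE'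
  have hL1' : ∀ w a b : Eu d, ‖hE a w - hE b w‖ ≤ K * ‖a - b‖ := by
    intro w a b
    rw [← eu_dist_eq (hE a w) (hE b w), ← eu_dist_eq a b]
    exact hLip1 w.ofLp a.ofLp b.ofLp
  have hL2' : ∀ a w v : Eu d, ‖hE a w - hE a v‖ ≤ K * ‖w - v‖ := by
    intro a w v
    rw [← eu_dist_eq (hE a w) (hE a v), ← eu_dist_eq w v]
    exact hLip2 a.ofLp w.ofLp v.ofLp
  have humeasE : Measurable uE :=
    (PiLp.continuous_toLp 2 _).measurable.comp humeas
  have hu' : ∀ s, ‖uE s‖ ≤ Cu := by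
    intro s
    rw [← eu_norm_eq (uE s)]
    exact hCu s
  have hyE : CadlagOn yE T := cadlag_map (PiLp.continuous_toLp 2 _) hy
  have intgr : ∀ w : ℝ → Eu d, CadlagOn w T →
      IntegrableOn (fun s => hE (w s) (uE s)) (Set.Icc 0 T) := by
    intro w hw
    obtain ⟨Cw, hCw⟩ := cadlag_bounded hT hw
    exact integrand_integrableOn hK hE hL1' hL2' uE humeasE Cu hu' w
      (cadlag_aesm hT hw.1) Cw hCw
  have proj_comm : ∀ w : ℝ → Eu d, CadlagOn w T → ∀ t ∈ Set.Icc (0:ℝ) T, ∀ i : Fin d,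
      (∫ s in (0:ℝ)..t, hE (w s) (uE s)) i = ∫ s in (0:ℝ)..t, hE (w s) (uE s) i := by
    intro w hw t ht i
    have hii := ii_of_Icc (intgr w hw) ht
    have hcomm := (EuclideanSpace.proj (𝕜 := ℝ) i).intervalIntegral_comp_comm hii
    simpa [PiLp.proj_apply] using hcomm.symm
  have vec_of_comp : ∀ y₀ w : ℝ → Eu d, CadlagOn w T →
      (∀ t ∈ Set.Icc (0:ℝ) T, ∀ i, w t i = y₀ t i + ∫ s in (0:ℝ)..t, hE (w s) (uE s) i) →
      ∀ t ∈ Set.Icc (0:ℝ) T, w t = y₀ t + ∫ s in (0:ℝ)..t, hE (w s) (uE s) := by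
    intro y₀ w hw hwe t ht
    ext i
    have h2 := proj_comm w hw t ht i
    calc w t i = y₀ t i + ∫ s in (0:ℝ)..t, hE (w s) (uE s) i := hwe t ht i
      _ = y₀ t i + (∫ s in (0:ℝ)..t, hE (w s) (uE s)) i := by rw [h2]
      _ = (y₀ t + ∫ s in (0:ℝ)..t, hE (w s) (uE s)) i := by rw [PiLp.add_apply]
  have comp_of_vec : ∀ y₀ w : ℝ → Eu d, CadlagOn w T →
      (∀ t ∈ Set.Icc (0:ℝ) T, w t = y₀ t + ∫ s in (0:ℝ)..t, hE (w s) (uE s)) →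
      ∀ t ∈ Set.Icc (0:ℝ) T, ∀ i, w t i = y₀ t i + ∫ s in (0:ℝ)..t, hE (w s) (uE s) i := by
    intro y₀ w hw hwe t ht i
    have h2 := proj_comm w hw t ht i
    rw [← h2]
    have h3 := hwe t ht
    calc w t i = (y₀ t + ∫ s in (0:ℝ)..t, hE (w s) (uE s)) i := by rw [h3]
      _ = y₀ t i + (∫ s in (0:ℝ)..t, hE (w s) (uE s)) i := by rw [PiLp.add_apply]
  obtain ⟨x, hxc, hxe⟩ := exists_sol hT hK hE hL1' hL2' yE hyE uE humeasE Cu hu'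
  refine ⟨⟨fun t => (x t).ofLp, cadlag_map (PiLp.continuous_ofLp 2 _) hxc,
    comp_of_vec yE x hxc hxe, ?_⟩, ?_⟩
  · intro x' hx'c hx'e t ht
    set x'E : ℝ → Eu d := fun t => WithLp.toLp 2 (x' t) with hx'E
    have hx'c' : CadlagOn x'E T := cadlag_map (PiLp.continuous_toLp 2 _) hx'c
    have hx'v := vec_of_comp yE x'E hx'c' hx'e
    have hstab := stability_aux hT hK hE hL1' hL2' uE humeasE Cu hu' x'E x yE yE hx'c' hxc
      hx'v hxe 0 (fun r _ => by simp) t ht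
    have hz : ‖x'E t - x t‖ ≤ 0 := by simpa using hstab
    have hd : dist (x'E t) (x t) = 0 := by
      rw [dist_eq_norm]; exact le_antisymm hz (norm_nonneg _)
    have hfin : x'E t = x t := eq_of_dist_eq_zero hd
    exact congrArg WithLp.ofLp hfin
  · intro y₁ y₂ x₁ x₂ hx₁ hx₂ he₁ he₂ M hM t ht
    set y₁E : ℝ → Eu d := fun t => WithLp.toLp 2 (y₁ t) with hy₁E
    set y₂E : ℝ → Eu d := fun t => WithLp.toLp 2 (y₂ t) with hy₂E
    set x₁E : ℝ → Eu d := fun t => WithLp.toLp 2 (x₁ t) with hx₁E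
    set x₂E : ℝ → Eu d := fun t => WithLp.toLp 2 (x₂ t) with hx₂E
    have hx₁' : CadlagOn x₁E T := cadlag_map (PiLp.continuous_toLp 2 _) hx₁
    have hx₂' : CadlagOn x₂E T := cadlag_map (PiLp.continuous_toLp 2 _) hx₂
    have hM' : ∀ r ∈ Set.Icc (0:ℝ) T, ‖y₁E r - y₂E r‖ ≤ M := by
      intro r hr
      rw [← eu_dist_eq (y₁E r) (y₂E r)]
      exact hM r hr
    have hstab := stability_aux hT hK hE hL1' hL2' uE humeasE Cu hu' x₁E x₂E y₁E y₂E hx₁' hx₂'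
      (vec_of_comp y₁E x₁E hx₁' he₁) (vec_of_comp y₂E x₂E hx₂' he₂) M hM' t ht
    have hdd := eu_dist_eq (x₁E t) (x₂E t)
    rw [← hdd] at hstab
    exact hstab
end
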